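/- arXiv:1811.05160 — 3 statements merged into one kernel-verified Lean document; each statement's English description precedes it below -/
import Mathlib

section
/- In the setting of the forward-chaining chain S = W_0 ⊊ W_1 ⊊ ⋯ ⊊ W_t ⊇ S' associated with a round-minimal L-optimal CNF Φ for price_L(S,S'), with B_i a smallest member of 𝓑 contained in W_i for i = 0,…,t−1 and B_t := S', define i_0 = 0 and, for j > 0, let i_j be the smallest index with |B_{i_j}| ≤ |B_{i_{j−1}}|/2; let r−1 be the largest value for which B_{i_{r−1}} exists, and set B_{i_r} := S'. Then Φ^(2) := ⋀_{j=0}^{r−1} B_{i_j} → (B_{i_{j+1}} \ (S ∪ ⋃_{ℓ=1}^{j} B_{i_ℓ})) satisfies S' ⊆ F_{Φ^(2)}(S) and |Φ^(2)|_L ≤ 2 · |Φ^(1)|_L, where Φ^(1) := ⋀_{i=0}^{t−1} B_i → (B_{i+1} \ (S ∪ ⋃_{j=1}^{i} B_j)). -/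
open Finset

variable {V : Type*} [Fintype V] [DecidableEq V]

/-- A pure Horn CNF is a finite set of clauses `(B, v)`: body `B`, head `v`,
with `B` nonempty and `v ∉ B`. -/
def PureHorn (Φ : Finset (Finset V × V)) : Prop :=
  ∀ c ∈ Φ, c.1.Nonempty ∧ c.2 ∉ c.1

/-- A set `W` is closed under the clauses of `Φ`. -/
def HornClosed (Φ : Finset (Finset V × V)) (W : Set V) : Prop :=
  ∀ c ∈ Φ, ↑c.1 ⊆ W → c.2 ∈ W

/-- Forward-chaining closure `F_Φ(Z)`: the smallest set containing `Z`
that is closed under the clauses of `Φ`. -/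
def hornClosure (Φ : Finset (Finset V × V)) (Z : Set V) : Set V :=
  ⋂₀ {W : Set V | Z ⊆ W ∧ HornClosed Φ W}

/-- `Ψ_𝓑 = ⋀_{B ∈ 𝓑} B → (V \ B)`. -/
def keyCNF (𝓑 : Finset (Finset V)) : Finset (Finset V × V) :=
  𝓑.biUnion fun B => (Finset.univ \ B).image fun v => (B, v)

/-- `Φ` represents the key Horn function `h_𝓑`, i.e. `Φ` is a pure Horn CNF
equivalent to `Ψ_𝓑`. -/
def Represents (𝓑 : Finset (Finset V)) (Φ : Finset (Finset V × V)) : Prop :=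
  PureHorn Φ ∧ ∀ Z : Finset V, hornClosure Φ ↑Z = hornClosure (keyCNF 𝓑) ↑Z

/-- (B) number of (distinct) bodies. -/
def sizeB (Φ : Finset (Finset V × V)) : ℕ := (Φ.image Prod.fst).card
/-- (BA) body area `Σ_i |B_i|` over the distinct bodies. -/
def sizeBA (Φ : Finset (Finset V × V)) : ℕ := ∑ B ∈ Φ.image Prod.fst, B.card
/-- (C) number of clauses `Σ_i |H_i|`. -/
def sizeC (Φ : Finset (Finset V × V)) : ℕ := Φ.card
/-- (TA) total area `Σ_i (|B_i| + |H_i|)`. -/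
def sizeTA (Φ : Finset (Finset V × V)) : ℕ := sizeBA Φ + sizeC Φ
/-- (BC) bodies plus clauses `Σ_i (|H_i| + 1)`. -/
def sizeBC (Φ : Finset (Finset V × V)) : ℕ := sizeB Φ + sizeC Φ
/-- (L) number of literals `Σ_i (|B_i| + 1)·|H_i|`. -/
def sizeL (Φ : Finset (Finset V × V)) : ℕ := ∑ c ∈ Φ, (c.1.card + 1)

/-- `μ` is one of the six size measures. -/
def IsMeasure (μ : Finset (Finset V × V) → ℕ) : Prop :=
  μ = sizeB ∨ μ = sizeBA ∨ μ = sizeTA ∨ μ = sizeC ∨ μ = sizeBC ∨ μ = sizeL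

/-- `OPT_μ(𝓑)`: minimum `μ`-size of a CNF representing `h_𝓑`. -/
noncomputable def OPT (μ : Finset (Finset V × V) → ℕ) (𝓑 : Finset (Finset V)) : ℕ :=
  sInf {s : ℕ | ∃ Φ : Finset (Finset V × V), Represents 𝓑 Φ ∧ μ Φ = s}

/-- `price_μ(S,T)`: minimum `μ`-size of a pure Horn CNF with bodies in `𝓑`
whose forward chaining from `S` reaches all of `T`. -/
noncomputable def price (μ : Finset (Finset V × V) → ℕ) (𝓑 : Finset (Finset V))
    (S T : Finset V) : ℕ :=
  sInf {s : ℕ | ∃ Φ : Finset (Finset V × V),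
    PureHorn Φ ∧ (∀ c ∈ Φ, c.1 ∈ 𝓑) ∧ ↑T ⊆ hornClosure Φ ↑S ∧ μ Φ = s}

/-- One round of forward chaining. -/
def fcStep (Φ : Finset (Finset V × V)) (W : Finset V) : Finset V :=
  W ∪ (Φ.filter fun c => c.1 ⊆ W).image Prod.snd

/-- The forward-chaining chain `W_0 = S`, `W_{i+1} = fcStep Φ W_i`. -/
def fcChain (Φ : Finset (Finset V × V)) (S : Finset V) : ℕ → Finset V
  | 0 => S
  | i + 1 => fcStep Φ (fcChain Φ S i)

/-- The CNF `⋀_{i=0}^{t-1} Bs i → (Bs (i+1) \ (S ∪ ⋃_{j=1}^{i} Bs j))`. -/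
def chainCNF (S : Finset V) (Bs : ℕ → Finset V) (t : ℕ) :
    Finset (Finset V × V) :=
  (Finset.range t).biUnion fun i =>
    (Bs (i + 1) \ (S ∪ (Finset.Icc 1 i).biUnion Bs)).image fun v => (Bs i, v)

set_option linter.unusedSectionVars false

/-- The head set of the `i`-th clause group of `chainCNF`. -/
def chainHead (S : Finset V) (Bs : ℕ → Finset V) (i : ℕ) : Finset V :=
  Bs (i + 1) \ (S ∪ (Finset.Icc 1 i).biUnion Bs)

lemma mem_chainCNF {S : Finset V} {Bs : ℕ → Finset V} {t : ℕ} {c : Finset V × V} :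
    c ∈ chainCNF S Bs t ↔ ∃ i < t, c.1 = Bs i ∧ c.2 ∈ chainHead S Bs i := by
  simp only [chainCNF, chainHead, Finset.mem_biUnion, Finset.mem_range, Finset.mem_image]
  constructor
  · rintro ⟨i, hi, v, hv, rfl⟩; exact ⟨i, hi, rfl, hv⟩
  · rintro ⟨i, hi, h1, h2⟩
    exact ⟨i, hi, c.2, h2, by rw [← h1]⟩

lemma chainHead_unique {S : Finset V} {Bs : ℕ → Finset V} {i i' : ℕ} {v : V}
    (h : i < i') (h1 : v ∈ chainHead S Bs i) (h2 : v ∈ chainHead S Bs i') : False := by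
  simp only [chainHead, Finset.mem_sdiff, Finset.mem_union, Finset.mem_biUnion,
    Finset.mem_Icc] at h1 h2
  exact h2.2 (Or.inr ⟨i + 1, ⟨Nat.succ_le_succ (Nat.zero_le i), h⟩, h1.1⟩)

lemma chainHead_eq {S : Finset V} {Bs : ℕ → Finset V} {i i' : ℕ} {v : V}
    (h1 : v ∈ chainHead S Bs i) (h2 : v ∈ chainHead S Bs i') : i = i' := by
  rcases lt_trichotomy i i' with h | h | h
  · exact absurd (chainHead_unique h h1 h2) (not_false)
  · exact h
  · exact absurd (chainHead_unique h h2 h1) (not_false)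

lemma subset_hornClosure (Φ : Finset (Finset V × V)) (Z : Set V) :
    Z ⊆ hornClosure Φ Z := by
  intro v hv
  intro W hW
  exact hW.1 hv

lemma hornClosed_hornClosure (Φ : Finset (Finset V × V)) (Z : Set V) :
    HornClosed Φ (hornClosure Φ Z) := by
  intro c hc hsub
  intro W hW
  exact hW.2 c hc (fun x hx => hsub hx W hW)

lemma hornClosure_subset {Φ : Finset (Finset V × V)} {Z W : Set V}
    (hZ : Z ⊆ W) (hW : HornClosed Φ W) : hornClosure Φ Z ⊆ W :=
  Set.sInter_subset_of_mem ⟨hZ, hW⟩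

/-- Proposition 4: with `i_0 = 0`, `i_j` the smallest index with
`|B_{i_j}| ≤ |B_{i_{j-1}}|/2`, `r-1` the largest value for which `B_{i_{r-1}}`
exists, and `B_{i_r} := S'`, the CNF
`Φ^(2) = ⋀_{j=0}^{r-1} B_{i_j} → (B_{i_{j+1}} \ (S ∪ ⋃_{ℓ=1}^{j} B_{i_ℓ}))`
satisfies `S' ⊆ F_{Φ^(2)}(S)` and `|Φ^(2)|_L ≤ 2·|Φ^(1)|_L`. -/
theorem stmt13 {V : Type*} [Fintype V] [DecidableEq V]
    (𝓑 : Finset (Finset V))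
    (hne : ∀ B ∈ 𝓑, B.Nonempty) (hproper : ∀ B ∈ 𝓑, B ≠ Finset.univ)
    (hsperner : ∀ B ∈ 𝓑, ∀ B' ∈ 𝓑, B ⊆ B' → B = B')
    (hcover : ∀ v : V, ∃ B ∈ 𝓑, v ∈ B)
    (hinter : ∀ v : V, ∃ B ∈ 𝓑, v ∉ B)
    (S S' : Finset V) (hS : ∃ B ∈ 𝓑, B ⊆ S)
    (Φ : Finset (Finset V × V)) (t : ℕ)
    (hPH : PureHorn Φ) (hbodies : ∀ c ∈ Φ, c.1 ∈ 𝓑)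
    (hSreach : ↑S' ⊆ hornClosure Φ ↑S)
    (hopt : sizeL Φ = price sizeL 𝓑 S S')
    (hstab : fcChain Φ S t = fcChain Φ S (t + 1))
    (htleast : ∀ j < t, fcChain Φ S j ≠ fcChain Φ S (j + 1))
    (hround : ∀ (Φ' : Finset (Finset V × V)) (t' : ℕ), PureHorn Φ' →
      (∀ c ∈ Φ', c.1 ∈ 𝓑) → ↑S' ⊆ hornClosure Φ' ↑S →
      sizeL Φ' = price sizeL 𝓑 S S' →
      fcChain Φ' S t' = fcChain Φ' S (t' + 1) → t ≤ t')
    (Bseq : ℕ → Finset V)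
    (hBseq : ∀ i < t, Bseq i ∈ 𝓑 ∧ Bseq i ⊆ fcChain Φ S i ∧
      ∀ B' ∈ 𝓑, B' ⊆ fcChain Φ S i → (Bseq i).card ≤ B'.card)
    (hBt : Bseq t = S')
    (r : ℕ) (hr : 1 ≤ r) (idx : ℕ → ℕ) (hidx0 : idx 0 = 0)
    (hidx : ∀ j : ℕ, 1 ≤ j → j ≤ r - 1 →
      idx j < t ∧ 2 * (Bseq (idx j)).card ≤ (Bseq (idx (j - 1))).card ∧
      ∀ i' < idx j, ¬ 2 * (Bseq i').card ≤ (Bseq (idx (j - 1))).card)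
    (hrmax : ∀ i' < t, ¬ 2 * (Bseq i').card ≤ (Bseq (idx (r - 1))).card)
    (Bi : ℕ → Finset V)
    (hBi : ∀ j : ℕ, Bi j = if j = r then S' else Bseq (idx j))
    : ↑S' ⊆ hornClosure (chainCNF S Bi r) ↑S ∧
      sizeL (chainCNF S Bi r) ≤ 2 * sizeL (chainCNF S Bseq t) := by
  classical
  by_cases ht : t = 0
  · -- degenerate case: S is already closed, so S' ⊆ S and Φ² is empty
    subst ht
    have hr1 : r = 1 := by
      by_contra hcon
      have h2 : 1 ≤ r - 1 := by omega
      exact absurd (hidx 1 le_rfl h2).1 (by omega)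
    have hfix : fcStep Φ S = S := by
      have : fcChain Φ S 0 = fcChain Φ S 1 := hstab
      simpa [fcChain] using this.symm
    have hSclosed : HornClosed Φ (↑S : Set V) := by
      intro c hc hsub
      have h2 : c.2 ∈ fcStep Φ S := by
        refine Finset.mem_union_right _ (Finset.mem_image.mpr ⟨c, ?_, rfl⟩)
        exact Finset.mem_filter.mpr ⟨hc, fun x hx => hsub hx⟩
      rw [hfix] at h2
      exact h2
    have hS'S : S' ⊆ S := by
      intro v hv
      exact hornClosure_subset (le_refl (↑S : Set V)) hSclosed (hSreach hv)
    have hempty : chainCNF S Bi r = ∅ := by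
      rw [Finset.eq_empty_iff_forall_notMem]
      intro c hc
      obtain ⟨i, hi, _, hhead⟩ := mem_chainCNF.mp hc
      have hi0 : i = 0 := by omega
      subst hi0
      simp only [chainHead, Finset.mem_sdiff, Finset.mem_union] at hhead
      have : Bi 1 = S' := by rw [hBi]; simp [hr1]
      rw [this] at hhead
      exact hhead.2 (Or.inl (hS'S hhead.1))
    rw [hempty]
    constructor
    · intro v hv
      have hvS : v ∈ S := hS'S (by exact_mod_cast hv)
      exact subset_hornClosure (∅ : Finset (Finset V × V)) ↑S (Finset.mem_coe.mpr hvS)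
    · simp [sizeL]
  · have ht1 : 1 ≤ t := Nat.one_le_iff_ne_zero.mpr ht
    have hB0S : Bseq 0 ⊆ S := by
      have h := (hBseq 0 ht1).2.1
      simpa [fcChain] using h
    have hBi0 : Bi 0 = Bseq 0 := by
      rw [hBi, if_neg (by omega), hidx0]
    -- Part 1: S' ⊆ F_{Φ²}(S)
    have keycl : ∀ j, j ≤ r → (↑(Bi j) : Set V) ⊆ hornClosure (chainCNF S Bi r) ↑S := by
      intro j
      induction j using Nat.strong_induction_on with
      | _ j IH =>
        intro hjr v hv
        match j, hv with
        | 0, hv =>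
          rw [hBi0] at hv
          exact subset_hornClosure _ _ (by exact_mod_cast hB0S hv)
        | j + 1, hv =>
          have hv' : v ∈ Bi (j + 1) := hv
          by_cases hcase : v ∈ S ∪ (Finset.Icc 1 j).biUnion Bi
          · rcases Finset.mem_union.mp hcase with hS0 | hm
            · exact subset_hornClosure _ _ (by exact_mod_cast hS0)
            · obtain ⟨ℓ, hℓ, hvℓ⟩ := Finset.mem_biUnion.mp hm
              rw [Finset.mem_Icc] at hℓ
              exact IH ℓ (by omega) (by omega) hvℓ
          · have hcl : ((Bi j, v) : Finset V × V) ∈ chainCNF S Bi r :=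
              mem_chainCNF.mpr ⟨j, by omega, rfl,
                Finset.mem_sdiff.mpr ⟨hv', hcase⟩⟩
            exact hornClosed_hornClosure (chainCNF S Bi r) (↑S) _ hcl
              (fun x hx => IH j (by omega) (by omega) hx)
    have hBir : Bi r = S' := by rw [hBi, if_pos rfl]
    refine ⟨by rw [← hBir]; exact keycl r le_rfl, ?_⟩
    -- Part 2: size bound
    -- every element of Bseq k \ S appears in some head of Φ¹
    have claim3 : ∀ k, ∀ v ∈ Bseq k, v ∉ S → ∃ i < k, v ∈ chainHead S Bseq i := by
      intro k
      induction k using Nat.strong_induction_on with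
      | _ k IH =>
        intro v hv hvS
        match k with
        | 0 => exact absurd (hB0S hv) hvS
        | k + 1 =>
          by_cases hh : v ∈ chainHead S Bseq k
          · exact ⟨k, Nat.lt_succ_self k, hh⟩
          · have hun : v ∈ S ∪ (Finset.Icc 1 k).biUnion Bseq := by
              by_contra hcon
              exact hh (Finset.mem_sdiff.mpr ⟨hv, hcon⟩)
            rcases Finset.mem_union.mp hun with hS0 | hm
            · exact absurd hS0 hvS
            · obtain ⟨m, hm1, hm2⟩ := Finset.mem_biUnion.mp hm
              rw [Finset.mem_Icc] at hm1
              obtain ⟨i, hik, hhead⟩ := IH m (by omega) v hm2 hvS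
              exact ⟨i, by omega, hhead⟩
    -- key per-clause fact
    have hkey : ∀ c ∈ chainCNF S Bi r,
        ∃ i, (i < t ∧ c.2 ∈ chainHead S Bseq i) ∧
          c.1.card + 1 ≤ 2 * ((Bseq i).card + 1) := by
      intro c hc
      obtain ⟨j, hjr, hc1, hc2⟩ := mem_chainCNF.mp hc
      set v := c.2 with hvdef
      have hvB : v ∈ Bi (j + 1) := (Finset.mem_sdiff.mp hc2).1
      have hvS : v ∉ S := fun h =>
        (Finset.mem_sdiff.mp hc2).2 (Finset.mem_union_left _ h)
      have hc1' : c.1 = Bseq (idx j) := by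
        rw [hc1, hBi, if_neg (by omega)]
      -- the target index
      by_cases hjr' : j + 1 = r
      · -- last step: Bi r = S' = Bseq t
        have hvk : v ∈ Bseq t := by
          rw [hBt]; rw [hjr', hBir] at hvB; exact hvB
        obtain ⟨i, hik, hhead⟩ := claim3 t v hvk hvS
        refine ⟨i, ⟨hik, hhead⟩, ?_⟩
        have hjr1 : j = r - 1 := by omega
        have := hrmax i hik
        rw [← hjr1] at this
        rw [hc1']
        omega
      · have hj1 : 1 ≤ j + 1 := by omega
        have hj2 : j + 1 ≤ r - 1 := by omega
        obtain ⟨hlt, _, hmin⟩ := hidx (j + 1) hj1 hj2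
        have hvk : v ∈ Bseq (idx (j + 1)) := by
          rw [hBi, if_neg hjr'] at hvB; exact hvB
        obtain ⟨i, hik, hhead⟩ := claim3 (idx (j + 1)) v hvk hvS
        refine ⟨i, ⟨by omega, hhead⟩, ?_⟩
        have := hmin i hik
        simp only [Nat.add_sub_cancel] at this
        rw [hc1']
        omega
    -- charging map
    let iOf : V → ℕ := fun v =>
      if h : ∃ i, i < t ∧ v ∈ chainHead S Bseq i then h.choose else 0
    let f : Finset V × V → Finset V × V := fun c => (Bseq (iOf c.2), c.2)
    have hiOf : ∀ (v : V) (i : ℕ), i < t → v ∈ chainHead S Bseq i → iOf v = i := by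
      intro v i hit hhd
      have hex : ∃ i, i < t ∧ v ∈ chainHead S Bseq i := ⟨i, hit, hhd⟩
      simp only [iOf, dif_pos hex]
      exact chainHead_eq hex.choose_spec.2 hhd
    have hfc : ∀ c ∈ chainCNF S Bi r,
        f c ∈ chainCNF S Bseq t ∧ c.1.card + 1 ≤ 2 * ((f c).1.card + 1) := by
      intro c hc
      obtain ⟨i, ⟨hit, hhd⟩, hb⟩ := hkey c hc
      have hio : iOf c.2 = i := hiOf c.2 i hit hhd
      constructor
      · refine mem_chainCNF.mpr ⟨i, hit, ?_, ?_⟩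
        · show Bseq (iOf c.2) = Bseq i
          rw [hio]
        · exact hhd
      · show c.1.card + 1 ≤ 2 * ((Bseq (iOf c.2)).card + 1)
        rw [hio]; exact hb
    have hinj : ∀ c ∈ chainCNF S Bi r, ∀ c' ∈ chainCNF S Bi r, f c = f c' → c = c' := by
      intro c hc c' hc' hfeq
      have h2 : c.2 = c'.2 := by
        have := congrArg Prod.snd hfeq
        simpa [f] using this
      obtain ⟨j, hjr, hc1, hhd⟩ := mem_chainCNF.mp hc
      obtain ⟨j', hjr', hc1', hhd'⟩ := mem_chainCNF.mp hc'
      rw [h2] at hhd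
      have hjj : j = j' := chainHead_eq hhd hhd'
      have h1 : c.1 = c'.1 := by rw [hc1, hc1', hjj]
      exact Prod.ext h1 h2
    calc sizeL (chainCNF S Bi r)
        = ∑ c ∈ chainCNF S Bi r, (c.1.card + 1) := rfl
      _ ≤ ∑ c ∈ chainCNF S Bi r, 2 * ((f c).1.card + 1) :=
          Finset.sum_le_sum (fun c hc => (hfc c hc).2)
      _ = ∑ d ∈ (chainCNF S Bi r).image f, 2 * (d.1.card + 1) :=
          by rw [Finset.sum_image hinj]
      _ ≤ ∑ d ∈ chainCNF S Bseq t, 2 * (d.1.card + 1) := by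
          apply Finset.sum_le_sum_of_subset
          intro d hd
          obtain ⟨c, hc, rfl⟩ := Finset.mem_image.mp hd
          exact (hfc c hc).1
      _ = 2 * sizeL (chainCNF S Bseq t) := by
          rw [sizeL, Finset.mul_sum]
end

section
/- In the setting of the forward-chaining chain S = W_0 ⊊ W_1 ⊊ ⋯ ⊊ W_t ⊇ S' associated with a round-minimal L-optimal CNF Φ for price_L(S,S'), with B_i a smallest member of 𝓑 contained in W_i for i = 0,…,t−1, B_t := S', indices i_0 = 0, i_j the smallest index with |B_{i_j}| ≤ |B_{i_{j−1}}|/2 for j > 0, r−1 the largest value for which B_{i_{r−1}} exists, and B_{i_r} := S', the CNFs Φ^(2) := ⋀_{j=0}^{r−1} B_{i_j} → (B_{i_{j+1}} \ (S ∪ ⋃_{ℓ=1}^{j} B_{i_ℓ})) and Φ^(3) := ⋀_{j=0}^{r−1} B_{i_j} → (B_{i_{j+1}} \ (S ∪ B_{i_j})) satisfy |Φ^(3)|_L ≤ (27/17) · |Φ^(2)|_L. -/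
open Finset

variable {V : Type*} [Fintype V] [DecidableEq V]

/-- The CNF `⋀_{j=0}^{r-1} Bs j → (Bs (j+1) \ (S ∪ Bs j))`. -/
def phi3CNF (S : Finset V) (Bs : ℕ → Finset V) (r : ℕ) :
    Finset (Finset V × V) :=
  (Finset.range r).biUnion fun j =>
    (Bs (j + 1) \ (S ∪ Bs j)).image fun v => (Bs j, v)

private lemma sumUnionLe' {α : Type*} [DecidableEq α] (A B : Finset α) (f : α → ℕ) :
    ∑ x ∈ A ∪ B, f x ≤ ∑ x ∈ A, f x + ∑ x ∈ B, f x := by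
  have := Finset.sum_union_inter (s₁ := A) (s₂ := B) (f := f)
  omega

private lemma sumBiUnionLe' {γ α : Type*} [DecidableEq γ] [DecidableEq α]
    (s : Finset γ) (t : γ → Finset α) (f : α → ℕ) :
    ∑ x ∈ s.biUnion t, f x ≤ ∑ i ∈ s, ∑ x ∈ t i, f x := by
  induction s using Finset.induction with
  | empty => simp
  | @insert _ _ h ih =>
    rw [Finset.biUnion_insert, Finset.sum_insert h]
    exact le_trans (sumUnionLe' _ _ _) (by omega)

private lemma powChain' (a : ℕ → ℕ) (s : ℕ) :
    ∀ d : ℕ, (∀ j, s ≤ j → j < s + d → 2 * a (j + 1) ≤ a j) → 2 ^ d * a (s + d) ≤ a s := by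
  intro d
  induction d with
  | zero => simp
  | succ n ih =>
    intro h
    have h1 : 2 ^ n * a (s + n) ≤ a s := ih (fun j hj hj' => h j hj (by omega))
    have h2 : 2 * a (s + n + 1) ≤ a (s + n) := h (s + n) (by omega) (by omega)
    show 2 ^ (n + 1) * a (s + n + 1) ≤ a s
    calc 2 ^ (n+1) * a (s + n + 1) = 2 ^ n * (2 * a (s + n + 1)) := by
          rw [pow_succ]; ring
      _ ≤ 2 ^ n * a (s + n) := Nat.mul_le_mul_left _ h2
      _ ≤ a s := h1

private lemma sumChain' (a : ℕ → ℕ) (s : ℕ) :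
    ∀ d : ℕ, (∀ j, s ≤ j → j < s + d → 2 * a (j + 1) ≤ a j) →
      (∑ j ∈ Finset.Icc s (s + d), a j) + a (s + d) ≤ 2 * a s := by
  intro d
  induction d with
  | zero => simp; omega
  | succ n ih =>
    intro h
    show (∑ j ∈ Finset.Icc s (s + n + 1), a j) + a (s + n + 1) ≤ 2 * a s
    have h1 := ih (fun j hj hj' => h j hj (by omega))
    have h2 : 2 * a (s + n + 1) ≤ a (s + n) := h (s + n) (by omega) (by omega)
    have h3 : ∑ j ∈ Finset.Icc s (s + n + 1), a j
        = (∑ j ∈ Finset.Icc s (s + n), a j) + a (s + n + 1) :=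
      Finset.sum_Icc_succ_top (by omega) a
    omega

private lemma kBound' : ∀ k : ℕ, 17 * (k + 1) ≤ 6 * 2 ^ k + 27 := by
  intro k
  induction k with
  | zero => norm_num
  | succ n ih =>
    rcases Nat.lt_or_ge n 2 with h | h
    · interval_cases n <;> norm_num
    · have h4 : (4 : ℕ) ≤ 2 ^ n := by
        calc (4:ℕ) = 2 ^ 2 := by norm_num
        _ ≤ 2 ^ n := Nat.pow_le_pow_right (by norm_num) h
      rw [pow_succ]
      omega

private lemma chargeBound' (a : ℕ → ℕ) (m r : ℕ) (hm2 : m + 2 ≤ r - 1)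
    (hhalf : ∀ j, 1 ≤ j → j ≤ r - 1 → 2 * a j ≤ a (j - 1))
    (hpos : 1 ≤ a (r - 1)) (J : Finset ℕ) (hJ : J ⊆ Finset.Icc (m + 2) (r - 1)) :
    17 * ∑ j ∈ J, (a j + 1) ≤ 10 * (a m + 1) := by
  set s := m + 2 with hs
  set d := (r - 1) - s with hd
  have hsd : s + d = r - 1 := by omega
  have hchain : ∀ j, s ≤ j → j < s + d → 2 * a (j + 1) ≤ a j := by
    intro j hj hj'
    have := hhalf (j + 1) (by omega) (by omega)
    simpa using this
  have hsum : (∑ j ∈ Finset.Icc s (s + d), a j) + a (s + d) ≤ 2 * a s :=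
    sumChain' a s d hchain
  rw [← hsd] at hpos hJ
  have hpow : 2 ^ d * a (s + d) ≤ a s := powChain' a s d hchain
  have hpow2 : 2 ^ d ≤ a s := by
    have : 2 ^ d * 1 ≤ 2 ^ d * a (s + d) := Nat.mul_le_mul_left _ hpos
    omega
  have hk : 17 * (d + 1) ≤ 6 * 2 ^ d + 27 := kBound' d
  have ham : 4 * a s ≤ a m := by
    have h1 := hhalf (m + 1) (by omega) (by omega)
    have h2 := hhalf (m + 2) (by omega) (by omega)
    simp only [show m + 1 - 1 = m by omega, show m + 2 - 1 = m + 1 by omega] at h1 h2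
    rw [← hs] at h2
    omega
  have hJle : ∑ j ∈ J, (a j + 1) ≤ ∑ j ∈ Finset.Icc s (s + d), (a j + 1) :=
    Finset.sum_le_sum_of_subset hJ
  have hsplit : ∑ j ∈ Finset.Icc s (s + d), (a j + 1)
      = (∑ j ∈ Finset.Icc s (s + d), a j) + (d + 1) := by
    rw [Finset.sum_add_distrib, Finset.sum_const, Nat.card_Icc, smul_eq_mul]
    omega
  omega

section Aux
variable {V : Type*} [Fintype V] [DecidableEq V]

private lemma sizeL_body_image (B : Finset V) (H : Finset V) :
    ∑ c ∈ H.image (fun v => (B, v)), (c.1.card + 1) = (B.card + 1) * H.card := by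
  rw [Finset.sum_image (fun x _ y _ h => by simpa using congrArg Prod.snd h)]
  show ∑ _x ∈ H, (B.card + 1) = (B.card + 1) * H.card
  rw [Finset.sum_const, smul_eq_mul, mul_comm]

private lemma H2disj (S : Finset V) (Bi : ℕ → Finset V) {j j' : ℕ} (h : j < j') {v : V}
    (h1 : v ∈ Bi (j + 1) \ (S ∪ (Finset.Icc 1 j).biUnion Bi))
    (h2 : v ∈ Bi (j' + 1) \ (S ∪ (Finset.Icc 1 j').biUnion Bi)) : False := by
  simp only [Finset.mem_sdiff, Finset.mem_union, Finset.mem_biUnion, Finset.mem_Icc,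
    not_or, not_exists, not_and] at h1 h2
  exact h2.2.2 (j + 1) ⟨by omega, by omega⟩ h1.1

private lemma sizeL_chainCNF (S : Finset V) (Bi : ℕ → Finset V) (r : ℕ) :
    sizeL (chainCNF S Bi r) = ∑ j ∈ Finset.range r,
      ((Bi j).card + 1) * (Bi (j + 1) \ (S ∪ (Finset.Icc 1 j).biUnion Bi)).card := by
  unfold sizeL chainCNF
  rw [Finset.sum_biUnion ?hd]
  · exact Finset.sum_congr rfl fun j _ => sizeL_body_image _ _
  case hd =>
    intro i _ j _ hij
    rw [Function.onFun, Finset.disjoint_left]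
    rintro c hc1 hc2
    simp only [Finset.mem_image] at hc1 hc2
    obtain ⟨v, hv, rfl⟩ := hc1
    obtain ⟨w, hw, hq⟩ := hc2
    have hvw : w = v := congrArg Prod.snd hq
    subst hvw
    rcases (Ne.lt_or_gt hij) with h | h
    · exact H2disj S Bi h hv hw
    · exact H2disj S Bi h hw hv

private lemma sizeL_phi3CNF_le (S : Finset V) (Bi : ℕ → Finset V) (r : ℕ) :
    sizeL (phi3CNF S Bi r) ≤ ∑ j ∈ Finset.range r,
      ((Bi j).card + 1) * (Bi (j + 1) \ (S ∪ Bi j)).card := by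
  unfold sizeL phi3CNF
  refine le_trans (sumBiUnionLe' _ _ _) ?_
  exact Finset.sum_le_sum fun j _ => le_of_eq (sizeL_body_image _ _)

private lemma memT {S : Finset V} {Bi : ℕ → Finset V} {j : ℕ} {v : V}
    (h : v ∈ (Bi (j + 1) \ (S ∪ Bi j)) \ (Bi (j + 1) \ (S ∪ (Finset.Icc 1 j).biUnion Bi))) :
    v ∉ S ∧ ∃ ℓ, 1 ≤ ℓ ∧ ℓ < j ∧ v ∈ Bi ℓ := by
  simp only [Finset.mem_sdiff, Finset.mem_union, Finset.mem_biUnion, Finset.mem_Icc,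
    not_or, not_and, not_not] at h
  obtain ⟨⟨hB, hS, hBj⟩, h2⟩ := h
  refine ⟨hS, ?_⟩
  obtain ⟨ℓ, ⟨hℓ1, hℓ2⟩, hℓB⟩ := h2 hB hS
  refine ⟨ℓ, hℓ1, ?_, hℓB⟩
  rcases Nat.lt_or_ge ℓ j with h | h
  · exact h
  · exact absurd (show v ∈ Bi j by rwa [show ℓ = j by omega] at hℓB) hBj

end Aux

section Charge
variable {V : Type*} [Fintype V] [DecidableEq V]

private lemma phi3_charge (S : Finset V) (Bi : ℕ → Finset V) (r : ℕ)
    (hhalf : ∀ j, 1 ≤ j → j ≤ r - 1 → 2 * (Bi j).card ≤ (Bi (j - 1)).card)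
    (hpos : 3 ≤ r → 1 ≤ (Bi (r - 1)).card) :
    17 * ∑ j ∈ Finset.range r, ((Bi j).card + 1) *
        ((Bi (j + 1) \ (S ∪ Bi j)) \ (Bi (j + 1) \ (S ∪ (Finset.Icc 1 j).biUnion Bi))).card
      ≤ 10 * ∑ j ∈ Finset.range r, ((Bi j).card + 1) *
        (Bi (j + 1) \ (S ∪ (Finset.Icc 1 j).biUnion Bi)).card := by
  classical
  set a : ℕ → ℕ := fun j => (Bi j).card with ha
  set T : ℕ → Finset V := fun j =>
    (Bi (j + 1) \ (S ∪ Bi j)) \ (Bi (j + 1) \ (S ∪ (Finset.Icc 1 j).biUnion Bi)) with hT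
  set U : ℕ → Finset V := fun j => Bi (j + 1) \ (S ∪ (Finset.Icc 1 j).biUnion Bi) with hU
  have swap : ∀ (W : ℕ → Finset V),
      ∑ j ∈ Finset.range r, (a j + 1) * (W j).card
        = ∑ v ∈ Finset.univ, ∑ j ∈ (Finset.range r).filter (fun j => v ∈ W j), (a j + 1) := by
    intro W
    have e1 : ∀ j, (a j + 1) * (W j).card = ∑ v ∈ Finset.univ,
        (if v ∈ W j then a j + 1 else 0) := by
      intro j
      rw [Finset.sum_ite_mem, Finset.univ_inter, Finset.sum_const, smul_eq_mul, mul_comm]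
    calc ∑ j ∈ Finset.range r, (a j + 1) * (W j).card
        = ∑ j ∈ Finset.range r, ∑ v ∈ Finset.univ, (if v ∈ W j then a j + 1 else 0) :=
          Finset.sum_congr rfl fun j _ => e1 j
      _ = ∑ v ∈ Finset.univ, ∑ j ∈ Finset.range r, (if v ∈ W j then a j + 1 else 0) :=
          Finset.sum_comm
      _ = ∑ v ∈ Finset.univ, ∑ j ∈ (Finset.range r).filter (fun j => v ∈ W j), (a j + 1) :=
          Finset.sum_congr rfl fun v _ => (Finset.sum_filter _ _).symm
  rw [swap T, swap U, Finset.mul_sum, Finset.mul_sum]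
  refine Finset.sum_le_sum fun v _ => ?_
  set J : Finset ℕ := (Finset.range r).filter (fun j => v ∈ T j) with hJ
  rcases J.eq_empty_or_nonempty with hJe | ⟨j0, hj0⟩
  · rw [hJe]; simp
  · have hj0' := Finset.mem_filter.1 hj0
    have hj0r : j0 < r := Finset.mem_range.1 hj0'.1
    obtain ⟨hvS, ℓ0, hℓ01, hℓ0j, hℓ0B⟩ := memT hj0'.2
    have hPex : ∃ ℓ, 1 ≤ ℓ ∧ v ∈ Bi ℓ := ⟨ℓ0, hℓ01, hℓ0B⟩
    set L := Nat.find hPex with hL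
    have hLspec : 1 ≤ L ∧ v ∈ Bi L := Nat.find_spec hPex
    set m := L - 1 with hm
    have hmL : L = m + 1 := by omega
    have hJsub : J ⊆ Finset.Icc (m + 2) (r - 1) := by
      intro j hj
      have hj' := Finset.mem_filter.1 hj
      have hjr : j < r := Finset.mem_range.1 hj'.1
      obtain ⟨_, ℓ, hℓ1, hℓj, hℓB⟩ := memT hj'.2
      have hLle : L ≤ ℓ := Nat.find_min' hPex ⟨hℓ1, hℓB⟩
      exact Finset.mem_Icc.2 ⟨by omega, by omega⟩
    have hm2 : m + 2 ≤ r - 1 := by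
      have := Finset.mem_Icc.1 (hJsub hj0)
      omega
    have hvU : v ∈ U m := by
      simp only [hU, Finset.mem_sdiff, Finset.mem_union, Finset.mem_biUnion, Finset.mem_Icc,
        not_or, not_exists, not_and]
      refine ⟨by rw [← hmL]; exact hLspec.2, hvS, ?_⟩
      intro ℓ' hℓ' hℓ'B
      exact Nat.find_min hPex (show ℓ' < L by omega) ⟨hℓ'.1, hℓ'B⟩
    have hmmem : m ∈ (Finset.range r).filter (fun j => v ∈ U j) :=
      Finset.mem_filter.2 ⟨Finset.mem_range.2 (by omega), hvU⟩
    have hsingle : a m + 1 ≤ ∑ j ∈ (Finset.range r).filter (fun j => v ∈ U j), (a j + 1) :=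
      Finset.single_le_sum (f := fun j => a j + 1) (fun i _ => Nat.zero_le _) hmmem
    calc 17 * ∑ j ∈ J, (a j + 1)
        ≤ 10 * (a m + 1) := chargeBound' a m r hm2 hhalf (hpos (by omega)) J hJsub
      _ ≤ 10 * ∑ j ∈ (Finset.range r).filter (fun j => v ∈ U j), (a j + 1) :=
          Nat.mul_le_mul_left _ hsingle

end Charge

/-- Proposition 5: the CNFs
`Φ^(2) = ⋀_{j=0}^{r-1} B_{i_j} → (B_{i_{j+1}} \ (S ∪ ⋃_{ℓ=1}^{j} B_{i_ℓ}))`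
and `Φ^(3) = ⋀_{j=0}^{r-1} B_{i_j} → (B_{i_{j+1}} \ (S ∪ B_{i_j}))`
satisfy `|Φ^(3)|_L ≤ (27/17)·|Φ^(2)|_L`. -/
theorem stmt14 {V : Type*} [Fintype V] [DecidableEq V]
    (𝓑 : Finset (Finset V))
    (hne : ∀ B ∈ 𝓑, B.Nonempty) (hproper : ∀ B ∈ 𝓑, B ≠ Finset.univ)
    (hsperner : ∀ B ∈ 𝓑, ∀ B' ∈ 𝓑, B ⊆ B' → B = B')
    (hcover : ∀ v : V, ∃ B ∈ 𝓑, v ∈ B)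
    (hinter : ∀ v : V, ∃ B ∈ 𝓑, v ∉ B)
    (S S' : Finset V) (hS : ∃ B ∈ 𝓑, B ⊆ S)
    (Φ : Finset (Finset V × V)) (t : ℕ)
    (hPH : PureHorn Φ) (hbodies : ∀ c ∈ Φ, c.1 ∈ 𝓑)
    (hSreach : ↑S' ⊆ hornClosure Φ ↑S)
    (hopt : sizeL Φ = price sizeL 𝓑 S S')
    (hstab : fcChain Φ S t = fcChain Φ S (t + 1))
    (htleast : ∀ j < t, fcChain Φ S j ≠ fcChain Φ S (j + 1))
    (hround : ∀ (Φ' : Finset (Finset V × V)) (t' : ℕ), PureHorn Φ' →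
      (∀ c ∈ Φ', c.1 ∈ 𝓑) → ↑S' ⊆ hornClosure Φ' ↑S →
      sizeL Φ' = price sizeL 𝓑 S S' →
      fcChain Φ' S t' = fcChain Φ' S (t' + 1) → t ≤ t')
    (Bseq : ℕ → Finset V)
    (hBseq : ∀ i < t, Bseq i ∈ 𝓑 ∧ Bseq i ⊆ fcChain Φ S i ∧
      ∀ B' ∈ 𝓑, B' ⊆ fcChain Φ S i → (Bseq i).card ≤ B'.card)
    (hBt : Bseq t = S')
    (r : ℕ) (hr : 1 ≤ r) (idx : ℕ → ℕ) (hidx0 : idx 0 = 0)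
    (hidx : ∀ j : ℕ, 1 ≤ j → j ≤ r - 1 →
      idx j < t ∧ 2 * (Bseq (idx j)).card ≤ (Bseq (idx (j - 1))).card ∧
      ∀ i' < idx j, ¬ 2 * (Bseq i').card ≤ (Bseq (idx (j - 1))).card)
    (hrmax : ∀ i' < t, ¬ 2 * (Bseq i').card ≤ (Bseq (idx (r - 1))).card)
    (Bi : ℕ → Finset V)
    (hBi : ∀ j : ℕ, Bi j = if j = r then S' else Bseq (idx j))
    : (sizeL (phi3CNF S Bi r) : ℚ) ≤
        (27 / 17 : ℚ) * (sizeL (chainCNF S Bi r) : ℚ) := by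
  classical
  have hhalf : ∀ j, 1 ≤ j → j ≤ r - 1 → 2 * (Bi j).card ≤ (Bi (j - 1)).card := by
    intro j h1 h2
    obtain ⟨_, hhv, _⟩ := hidx j h1 h2
    rw [hBi j, hBi (j - 1), if_neg (by omega), if_neg (by omega)]
    exact hhv
  have hpos : 3 ≤ r → 1 ≤ (Bi (r - 1)).card := by
    intro h3
    obtain ⟨hlt, _, _⟩ := hidx (r - 1) (by omega) le_rfl
    obtain ⟨hmem, _, _⟩ := hBseq _ hlt
    rw [hBi (r - 1), if_neg (by omega)]
    exact Finset.card_pos.2 (hne _ hmem)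
  have e1 := sizeL_chainCNF S Bi r
  have e2 := sizeL_phi3CNF_le S Bi r
  have e5 := phi3_charge S Bi r hhalf hpos
  have e4 : ∑ j ∈ Finset.range r, ((Bi j).card + 1) * (Bi (j + 1) \ (S ∪ Bi j)).card
      ≤ ∑ j ∈ Finset.range r,
          ((Bi j).card + 1) * (Bi (j + 1) \ (S ∪ (Finset.Icc 1 j).biUnion Bi)).card
        + ∑ j ∈ Finset.range r, ((Bi j).card + 1) *
            ((Bi (j + 1) \ (S ∪ Bi j)) \ (Bi (j + 1) \ (S ∪ (Finset.Icc 1 j).biUnion Bi))).card := by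
    rw [← Finset.sum_add_distrib]
    refine Finset.sum_le_sum fun j _ => ?_
    rw [← Nat.mul_add]
    refine Nat.mul_le_mul_left _ ?_
    refine le_trans (Finset.card_le_card ?_) (Finset.card_union_le _ _)
    intro x hx
    by_cases hxU : x ∈ Bi (j + 1) \ (S ∪ (Finset.Icc 1 j).biUnion Bi)
    · exact Finset.mem_union_left _ hxU
    · exact Finset.mem_union_right _ (Finset.mem_sdiff.2 ⟨hx, hxU⟩)
  have key : 17 * sizeL (phi3CNF S Bi r) ≤ 27 * sizeL (chainCNF S Bi r) := by
    rw [e1]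
    omega
  have key' : (17 : ℚ) * (sizeL (phi3CNF S Bi r) : ℚ) ≤ 27 * (sizeL (chainCNF S Bi r) : ℚ) := by
    exact_mod_cast key
  linarith
end

section
/- Let A, B, C be finite sets and set E = B \ (A ∪ C), F = B ∩ (C \ A), G = C \ (A ∪ B), and a = |A|, b = |B|, c = |C|, e = |E|, f = |F|, g = |G|. Then the following three statements are equivalent (with all arithmetic over the integers): (a) cost_L(A,B,C) < cost_L(A,C); (b) (a − b)·g > (a + 1)·e; (c) a·(g − e) > e + b·g. -/
open Finset

/-- `cost_L(A,B,C) = (|A|+1)·|B\A| + (|B|+1)·|C\(A∪B)|`. -/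
def costL3 {α : Type*} [DecidableEq α] (A B C : Finset α) : ℕ :=
  (A.card + 1) * (B \ A).card + (B.card + 1) * (C \ (A ∪ B)).card

/-- `cost_L(A,C) = (|A|+1)·|C\A|`. -/
def costL2 {α : Type*} [DecidableEq α] (A C : Finset α) : ℕ :=
  (A.card + 1) * (C \ A).card

/-- Lemma on three sets: with `e = |B\(A∪C)|`, `f = |B∩(C\A)|`,
`g = |C\(A∪B)|`, the following are equivalent:
(a) `cost_L(A,B,C) < cost_L(A,C)`; (b) `(a-b)·g > (a+1)·e`;
(c) `a·(g-e) > e + b·g` (integer arithmetic). -/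
theorem stmt18 {α : Type*} [DecidableEq α] (A B C : Finset α)
    (a b c e f g : ℤ)
    (ha : a = A.card) (hb : b = B.card) (hc : c = C.card)
    (he : e = (B \ (A ∪ C)).card) (hf : f = (B ∩ (C \ A)).card)
    (hg : g = (C \ (A ∪ B)).card) :
    ((costL3 A B C < costL2 A C) ↔ (a - b) * g > (a + 1) * e) ∧
    (((a - b) * g > (a + 1) * e) ↔ a * (g - e) > e + b * g) := by
  have hBA : B \ A = (B \ (A ∪ C)) ∪ (B ∩ (C \ A)) := by
    ext x; simp only [mem_sdiff, mem_union, mem_inter]; tauto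
  have hCA : C \ A = (B ∩ (C \ A)) ∪ (C \ (A ∪ B)) := by
    ext x; simp only [mem_sdiff, mem_union, mem_inter]; tauto
  have d1 : Disjoint (B \ (A ∪ C)) (B ∩ (C \ A)) := by
    rw [Finset.disjoint_left]; intro x hx hy
    simp only [mem_sdiff, mem_union, mem_inter] at hx hy; tauto
  have d2 : Disjoint (B ∩ (C \ A)) (C \ (A ∪ B)) := by
    rw [Finset.disjoint_left]; intro x hx hy
    simp only [mem_sdiff, mem_union, mem_inter] at hx hy; tauto
  have h1 : ((B \ A).card : ℤ) = e + f := by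
    rw [hBA, card_union_of_disjoint d1]; push_cast; rw [he, hf]
  have h2 : ((C \ A).card : ℤ) = f + g := by
    rw [hCA, card_union_of_disjoint d2]; push_cast; rw [hf, hg]
  have key : (costL3 A B C < costL2 A C) ↔
      (a + 1) * (e + f) + (b + 1) * g < (a + 1) * (f + g) := by
    rw [costL3, costL2, ← Nat.cast_lt (α := ℤ)]
    push_cast
    rw [h1, h2, ← ha, ← hb, ← hg]
  have hf0 : 0 ≤ f := by rw [hf]; exact Int.natCast_nonneg _
  have he0 : 0 ≤ e := by rw [he]; exact Int.natCast_nonneg _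
  constructor
  · rw [key]; constructor <;> intro h <;> nlinarith
  · constructor <;> intro h <;> nlinarith
end
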